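/- Fix integers m ≥ 1 and 1 ≤ k ≤ n. Let β_r (for 0 ≤ r ≤ k(m+1)) be the coefficient of x^r in the real polynomial P(x) = ∏_{i=0}^{k-1} (1 - i/n + x)^{m+1}, and let S(r, j) denote the Stirling number of the second kind. Then (1/k!) ∑_{j=0}^{k-1} (-1)^{k+1-j} C(k-1, j) · (∏_{i=0}^{k-1} (n+j-i))^{m+1} = (n^{k(m+1)}/k) ∑_{r=k-1}^{k(m+1)} n^{-r} β_r S(r, k-1), as an identity of real numbers. -/

import Mathlib

open Polynomial

/-- Stirling numbers of the second kind: `stirling2 n k` is the number of partitions of an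
`n`-element set into `k` nonempty blocks, via the standard recurrence
`S(n+1, k+1) = (k+1) S(n, k+1) + S(n, k)`. -/
def stirling2 : ℕ → ℕ → ℕ
  | 0, 0 => 1
  | 0, _ + 1 => 0
  | _ + 1, 0 => 0
  | n + 1, k + 1 => (k + 1) * stirling2 n (k + 1) + stirling2 n k

open Finset

lemma stirling2_eq_zero : ∀ {r j : ℕ}, r < j → stirling2 r j = 0 := by
  intro r
  induction r with
  | zero => intro j h; match j, h with | j+1, _ => rfl
  | succ r ih =>
    intro j h
    match j, h with
    | j+1, h =>
      have h1 : r < j + 1 := by omega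
      have h2 : r < j := by omega
      show (j+1) * stirling2 r (j+1) + stirling2 r j = 0
      rw [ih h1, ih h2]; simp

lemma sum_alt (j : ℕ) : ∑ i ∈ range (j+1), (-1:ℝ)^(j+i) * (j.choose i : ℝ) = if j = 0 then 1 else 0 := by
  have h := Int.alternating_sum_range_choose (n := j)
  have h2 : ∑ i ∈ range (j+1), (-1:ℝ)^i * (j.choose i : ℝ) = if j = 0 then 1 else 0 := by
    have := congrArg (Int.cast : ℤ → ℝ) h
    push_cast at this
    simpa using this
  have h3 : ∑ i ∈ range (j+1), (-1:ℝ)^(j+i) * (j.choose i : ℝ)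
      = (-1)^j * ∑ i ∈ range (j+1), (-1:ℝ)^i * (j.choose i : ℝ) := by
    rw [Finset.mul_sum]
    exact Finset.sum_congr rfl fun i _ => by rw [pow_add]; ring
  rw [h3, h2]
  rcases Nat.eq_zero_or_pos j with hj | hj
  · simp [hj]
  · simp [Nat.pos_iff_ne_zero.mp hj]

lemma stirling2_formula : ∀ (r j : ℕ),
    (j.factorial : ℝ) * (stirling2 r j : ℝ)
      = ∑ i ∈ range (j+1), (-1:ℝ)^(j+i) * (j.choose i : ℝ) * (i:ℝ)^r := by
  intro r
  induction r with
  | zero =>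
    intro j
    have : ∑ i ∈ range (j+1), (-1:ℝ)^(j+i) * (j.choose i : ℝ) * (i:ℝ)^0
        = ∑ i ∈ range (j+1), (-1:ℝ)^(j+i) * (j.choose i : ℝ) := by
      exact Finset.sum_congr rfl fun i _ => by ring
    rw [this, sum_alt]
    rcases j with _ | j
    · simp [stirling2]
    · simp [stirling2]
  | succ r ih =>
    intro j
    rcases j with _ | j
    · simp [stirling2]
    · -- LHS
      have lhs_eq : ((j+1).factorial : ℝ) * (stirling2 (r+1) (j+1) : ℝ)
          = ((j:ℝ)+1) * (((j+1).factorial : ℝ) * (stirling2 r (j+1) : ℝ)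
              + ((j.factorial : ℝ) * (stirling2 r j : ℝ))) := by
        show ((j+1).factorial : ℝ) * (((j + 1) * stirling2 r (j + 1) + stirling2 r j : ℕ) : ℝ) = _
        rw [Nat.factorial_succ]
        push_cast
        ring
      rw [lhs_eq, ih, ih]
      -- RHS: peel the i = 0 term
      rw [Finset.sum_range_succ' (fun i => (-1:ℝ)^(j+1+i) * ((j+1).choose i : ℝ) * (i:ℝ)^(r+1))]
      simp only [Nat.cast_zero, Nat.choose_zero_right, Nat.cast_one]
      rw [show ((0:ℝ))^(r+1) = 0 by simp]
      rw [mul_zero, add_zero]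
      have step1 : ∀ i ∈ range (j+1),
          (-1:ℝ)^(j+1+(i+1)) * (((j+1).choose (i+1) : ℕ) : ℝ) * ((i+1 : ℕ):ℝ)^(r+1)
          = ((j:ℝ)+1) * ((-1:ℝ)^(j+i) * ((j.choose i : ℕ) : ℝ) * ((i:ℝ)+1)^r) := by
        intro i _
        have hc : ((j:ℝ)+1) * (j.choose i : ℝ) = (((j+1).choose (i+1) : ℕ) : ℝ) * ((i:ℝ)+1) := by
          have := Nat.add_one_mul_choose_eq j i
          have := congrArg (Nat.cast : ℕ → ℝ) this
          push_cast at this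
          linarith [this]
        have hsign : (-1:ℝ)^(j+1+(i+1)) = (-1:ℝ)^(j+i) := by
          rw [show j+1+(i+1) = (j+i)+2 by ring, pow_add]; norm_num
        rw [hsign]
        push_cast
        calc (-1:ℝ)^(j+i) * ((j+1).choose (i+1) : ℝ) * ((i:ℝ)+1)^(r+1)
            = (-1:ℝ)^(j+i) * (((j+1).choose (i+1) : ℝ) * ((i:ℝ)+1)) * ((i:ℝ)+1)^r := by
              rw [pow_succ]; ring
          _ = (-1:ℝ)^(j+i) * (((j:ℝ)+1) * (j.choose i : ℝ)) * ((i:ℝ)+1)^r := by rw [← hc]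
          _ = ((j:ℝ)+1) * ((-1:ℝ)^(j+i) * (j.choose i : ℝ) * ((i:ℝ)+1)^r) := by ring
      rw [Finset.sum_congr rfl step1, ← Finset.mul_sum]
      congr 1
      have ext2 : ∑ i ∈ range (j+2), (-1:ℝ)^(j+i) * (j.choose i : ℝ) * (i:ℝ)^r
          = ∑ i ∈ range (j+1), (-1:ℝ)^(j+i) * (j.choose i : ℝ) * (i:ℝ)^r := by
        rw [Finset.sum_range_succ]
        simp [Nat.choose_succ_self]
      have hS1 := Finset.sum_range_succ' (fun i => (-1:ℝ)^(j+1+i) * ((j+1).choose i : ℝ) * (i:ℝ)^r) (j+1)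
      have hS2' := Finset.sum_range_succ' (fun i => (-1:ℝ)^(j+i) * (j.choose i : ℝ) * (i:ℝ)^r) (j+1)
      have hS2 : ∑ i ∈ range (j+1), (-1:ℝ)^(j+i) * (j.choose i : ℝ) * (i:ℝ)^r
          = (∑ i ∈ range (j+1), (-1:ℝ)^(j+(i+1)) * (j.choose (i+1) : ℝ) * ((i+1:ℕ):ℝ)^r)
            + (-1:ℝ)^(j+0) * (j.choose 0 : ℝ) * ((0:ℕ):ℝ)^r := by
        rw [← ext2]; exact hS2'
      have hterms : ((-1:ℝ)^(j+1+0) * (((j+1).choose 0 : ℕ):ℝ) * ((0:ℕ):ℝ)^r)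
          + ((-1:ℝ)^(j+0) * ((j.choose 0 : ℕ):ℝ) * ((0:ℕ):ℝ)^r) = 0 := by
        simp [pow_succ]
      have main : ∀ i ∈ range (j+1),
          (-1:ℝ)^(j+i) * (j.choose i : ℝ) * ((i:ℝ)+1)^r
          = ((-1:ℝ)^(j+1+(i+1)) * (((j+1).choose (i+1) : ℕ):ℝ) * (((i+1:ℕ)):ℝ)^r)
            + ((-1:ℝ)^(j+(i+1)) * ((j.choose (i+1) : ℕ):ℝ) * (((i+1:ℕ)):ℝ)^r) := by
        intro i _
        have hc : (((j+1).choose (i+1) : ℕ):ℝ) = (j.choose i : ℝ) + (j.choose (i+1) : ℝ) := by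
          rw [Nat.choose_succ_succ]; push_cast; ring
        have hs1 : (-1:ℝ)^(j+1+(i+1)) = (-1:ℝ)^(j+i) := by
          rw [show j+1+(i+1) = (j+i)+2 by ring, pow_add]; norm_num
        have hs2 : (-1:ℝ)^(j+(i+1)) = -(-1:ℝ)^(j+i) := by
          rw [show j+(i+1) = (j+i)+1 by ring, pow_succ]; ring
        rw [hc, hs1, hs2]
        push_cast
        ring
      calc (∑ i ∈ range (j+2), (-1:ℝ)^(j+1+i) * ((j+1).choose i : ℝ) * (i:ℝ)^r)
            + ∑ i ∈ range (j+1), (-1:ℝ)^(j+i) * (j.choose i : ℝ) * (i:ℝ)^r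
          = ((∑ i ∈ range (j+1), (-1:ℝ)^(j+1+(i+1)) * ((j+1).choose (i+1) : ℝ) * ((i+1:ℕ):ℝ)^r)
              + (∑ i ∈ range (j+1), (-1:ℝ)^(j+(i+1)) * (j.choose (i+1) : ℝ) * ((i+1:ℕ):ℝ)^r))
            + (((-1:ℝ)^(j+1+0) * (((j+1).choose 0 : ℕ):ℝ) * ((0:ℕ):ℝ)^r)
              + ((-1:ℝ)^(j+0) * ((j.choose 0 : ℕ):ℝ) * ((0:ℕ):ℝ)^r)) := by
            rw [hS1, hS2]; ring
        _ = (∑ i ∈ range (j+1), (-1:ℝ)^(j+1+(i+1)) * ((j+1).choose (i+1) : ℝ) * ((i+1:ℕ):ℝ)^r)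
              + (∑ i ∈ range (j+1), (-1:ℝ)^(j+(i+1)) * (j.choose (i+1) : ℝ) * ((i+1:ℕ):ℝ)^r) := by
            rw [hterms]; ring
        _ = ∑ i ∈ range (j+1),
              (((-1:ℝ)^(j+1+(i+1)) * (((j+1).choose (i+1) : ℕ):ℝ) * (((i+1:ℕ)):ℝ)^r)
                + ((-1:ℝ)^(j+(i+1)) * ((j.choose (i+1) : ℕ):ℝ) * (((i+1:ℕ)):ℝ)^r)) :=
            (Finset.sum_add_distrib).symm
        _ = ∑ i ∈ range (j+1), (-1:ℝ)^(j+i) * (j.choose i : ℝ) * ((i:ℝ)+1)^r :=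
            (Finset.sum_congr rfl main).symm

theorem stmt4 (m k n : ℕ) (hm : 1 ≤ m) (hk : 1 ≤ k) (hkn : k ≤ n) :
    (1 / (k.factorial : ℝ)) *
        ∑ j ∈ Finset.range k,
          (-1 : ℝ) ^ (k + 1 - j) * ((k - 1).choose j : ℝ) *
            (∏ i ∈ Finset.range k, ((n : ℝ) + j - i)) ^ (m + 1) =
      ((n : ℝ) ^ (k * (m + 1)) / k) *
        ∑ r ∈ Finset.Icc (k - 1) (k * (m + 1)),
          ((n : ℝ) ^ r)⁻¹ *
            (∏ i ∈ Finset.range k, (Polynomial.C (1 - (i : ℝ) / n) + Polynomial.X) ^ (m + 1)).coeff r *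
            (stirling2 r (k - 1) : ℝ) := by
  obtain ⟨K, rfl⟩ : ∃ K, k = K + 1 := ⟨k - 1, by omega⟩
  simp only [Nat.add_sub_cancel]
  have hn : (0:ℝ) < n := by
    have : 1 ≤ n := le_trans hk hkn
    exact_mod_cast Nat.lt_of_lt_of_le Nat.zero_lt_one this
  have hn' : (n:ℝ) ≠ 0 := ne_of_gt hn
  set D := (K+1)*(m+1) with hD
  set P := ∏ i ∈ range (K+1), (Polynomial.C (1 - (i : ℝ) / n) + Polynomial.X) ^ (m + 1) with hP
  have hdeg : P.natDegree < D + 1 := by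
    have h1 : P.natDegree ≤ ∑ i ∈ range (K+1),
        ((Polynomial.C (1 - (i : ℝ) / n) + Polynomial.X) ^ (m + 1)).natDegree :=
      Polynomial.natDegree_prod_le _ _
    have h2 : ∀ i ∈ range (K+1),
        ((Polynomial.C (1 - (i : ℝ) / n) + Polynomial.X) ^ (m + 1)).natDegree ≤ m + 1 := by
      intro i _
      calc ((Polynomial.C (1 - (i : ℝ) / n) + Polynomial.X) ^ (m + 1)).natDegree
          ≤ (m+1) * (Polynomial.C (1 - (i : ℝ) / n) + Polynomial.X).natDegree :=
            Polynomial.natDegree_pow_le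
        _ ≤ (m+1) * 1 := by
            apply Nat.mul_le_mul_left
            rw [add_comm]
            exact le_of_eq (Polynomial.natDegree_X_add_C _)
        _ = m + 1 := by ring
    have h3 : ∑ i ∈ range (K+1),
        ((Polynomial.C (1 - (i : ℝ) / n) + Polynomial.X) ^ (m + 1)).natDegree ≤ D := by
      calc _ ≤ ∑ _i ∈ range (K+1), (m+1) := Finset.sum_le_sum h2
        _ = D := by simp [hD, mul_comm]
    omega
  have heval : ∀ x : ℝ, P.eval x = ∑ r ∈ range (D+1), P.coeff r * x^r := fun x =>
    Polynomial.eval_eq_sum_range' hdeg x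
  have heval2 : ∀ j : ℕ, P.eval ((j:ℝ)/n)
      = (∏ i ∈ range (K+1), ((n : ℝ) + j - i)) ^ (m + 1) / (n:ℝ)^D := by
    intro j
    have e1 : P.eval ((j:ℝ)/n) = ∏ i ∈ range (K+1), ((1 - (i:ℝ)/n) + (j:ℝ)/n)^(m+1) := by
      simp [hP, Polynomial.eval_prod]
    rw [e1]
    have e2 : ∀ i ∈ range (K+1), ((1 - (i:ℝ)/n) + (j:ℝ)/n)^(m+1)
        = ((n:ℝ) + j - i)^(m+1) / ((n:ℝ))^(m+1) := by
      intro i _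
      rw [← div_pow]
      congr 1
      field_simp
      ring
    rw [Finset.prod_congr rfl e2, Finset.prod_div_distrib, Finset.prod_pow,
      Finset.prod_const]
    congr 1
    rw [← pow_mul, Finset.card_range, hD, mul_comm (m+1) (K+1)]
  have hsign : ∀ j, j < K + 1 → (-1:ℝ)^(K+1+1-j) = (-1:ℝ)^(K+j) := by
    intro j hj
    have e1 : (-1:ℝ)^(K+1+1-j) = (-1:ℝ)^(K+1+1-j) * ((-1:ℝ)^2)^j := by norm_num
    have e2 : (K+1+1-j) + 2*j = (K+j) + 2 := by omega
    calc (-1:ℝ)^(K+1+1-j) = (-1:ℝ)^((K+1+1-j) + 2*j) := by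
          rw [pow_add, pow_mul]; exact e1
      _ = (-1:ℝ)^((K+j)+2) := by rw [e2]
      _ = (-1:ℝ)^(K+j) := by rw [pow_add]; norm_num
  -- common expression
  have hfK : (K.factorial : ℝ) ≠ 0 := by exact_mod_cast K.factorial_ne_zero
  have hfK1 : ((K+1).factorial : ℝ) ≠ 0 := by exact_mod_cast (K+1).factorial_ne_zero
  have hnD : (n:ℝ)^D ≠ 0 := pow_ne_zero _ hn'
  -- RHS sum manipulation
  have c1 : ∑ r ∈ Finset.Icc K D, ((n:ℝ)^r)⁻¹ * P.coeff r * (stirling2 r K : ℝ)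
      = ∑ r ∈ range (D+1), ((n:ℝ)^r)⁻¹ * P.coeff r * (stirling2 r K : ℝ) := by
    apply Finset.sum_subset
    · intro r hr
      simp only [Finset.mem_Icc] at hr
      simp only [Finset.mem_range]
      omega
    · intro r hr hr2
      simp only [Finset.mem_range] at hr
      simp only [Finset.mem_Icc] at hr2
      have : r < K := by omega
      rw [stirling2_eq_zero this]
      simp
  have c2 : ∑ r ∈ range (D+1), ((n:ℝ)^r)⁻¹ * P.coeff r * (stirling2 r K : ℝ)
      = (K.factorial : ℝ)⁻¹ * ∑ i ∈ range (K+1), (-1:ℝ)^(K+i) * (K.choose i : ℝ) *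
          ∑ r ∈ range (D+1), P.coeff r * ((i:ℝ)/n)^r := by
    have lhs_eq : ∀ r ∈ range (D+1), ((n:ℝ)^r)⁻¹ * P.coeff r * (stirling2 r K : ℝ)
        = ∑ i ∈ range (K+1), (K.factorial : ℝ)⁻¹ * ((-1:ℝ)^(K+i) * (K.choose i : ℝ) *
            (P.coeff r * ((i:ℝ)/n)^r)) := by
      intro r _
      have h0 : ((n:ℝ)^r)⁻¹ * P.coeff r * (stirling2 r K : ℝ)
          = (K.factorial : ℝ)⁻¹ * (((n:ℝ)^r)⁻¹ * P.coeff r *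
              ((K.factorial : ℝ) * (stirling2 r K : ℝ))) := by
        field_simp
      rw [h0, stirling2_formula r K]
      simp only [Finset.mul_sum]
      refine Finset.sum_congr rfl fun i _ => ?_
      rw [div_pow]
      have : ((n:ℝ)^r) ≠ 0 := pow_ne_zero _ hn'
      field_simp
    calc ∑ r ∈ range (D+1), ((n:ℝ)^r)⁻¹ * P.coeff r * (stirling2 r K : ℝ)
        = ∑ r ∈ range (D+1), ∑ i ∈ range (K+1),
            (K.factorial : ℝ)⁻¹ * ((-1:ℝ)^(K+i) * (K.choose i : ℝ) *
              (P.coeff r * ((i:ℝ)/n)^r)) := Finset.sum_congr rfl lhs_eq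
      _ = ∑ i ∈ range (K+1), ∑ r ∈ range (D+1),
            (K.factorial : ℝ)⁻¹ * ((-1:ℝ)^(K+i) * (K.choose i : ℝ) *
              (P.coeff r * ((i:ℝ)/n)^r)) := Finset.sum_comm
      _ = (K.factorial : ℝ)⁻¹ * ∑ i ∈ range (K+1), (-1:ℝ)^(K+i) * (K.choose i : ℝ) *
            ∑ r ∈ range (D+1), P.coeff r * ((i:ℝ)/n)^r := by
          simp only [← Finset.mul_sum]
  have c3 : ∑ r ∈ Finset.Icc K D, ((n:ℝ)^r)⁻¹ * P.coeff r * (stirling2 r K : ℝ)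
      = (K.factorial : ℝ)⁻¹ * ∑ i ∈ range (K+1), (-1:ℝ)^(K+i) * (K.choose i : ℝ) *
          ((∏ t ∈ range (K+1), ((n : ℝ) + i - t)) ^ (m + 1) / (n:ℝ)^D) := by
    rw [c1, c2]
    congr 1
    refine Finset.sum_congr rfl fun i _ => ?_
    rw [← heval, heval2]
  rw [c3]
  simp only [Finset.mul_sum]
  refine Finset.sum_congr rfl fun j hj => ?_
  simp only [Finset.mem_range] at hj
  rw [hsign j hj]
  have hfact : ((K+1).factorial : ℝ) = ((K:ℝ)+1) * (K.factorial : ℝ) := by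
    rw [Nat.factorial_succ]; push_cast; ring
  rw [hfact]
  field_simp
  push_cast
  ring
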